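/- Let J be a finite index set, r ∉ J, a : J → ℝ with a_j ≥ 0 for all j ∈ J, b ∈ ℝ, and P ⊆ J. Set b̃ := b − Σ_{j∈P} a_j and assume 0 < b̃ < 1, so that f(b̃) = b̃ where f(t) := t − ⌊t⌋. Define ψ(t) := ⌊t⌋ + min(1, f(t)/f(b̃)). Then every x ∈ ℝ^{J ∪ {r}} with x_j = 0 for all j ∈ J∖P and 0 ≤ x_j ≤ 1 for all j ∈ P that satisfies the cMIR constraint x_r + Σ_{j∈J∖P} ψ(a_j)·x_j − Σ_{j∈P} ψ(−a_j)·x_j ≥ 1 − Σ_{j∈P} ψ(−a_j) has x_r ≥ 1. -/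
import Mathlib


/-- Proposition 3 (tight propagation part): under the local bounds fixing the
variables in `J∖P` to 0 and letting the variables in `P` range in `[0,1]`,
the cMIR constraint forces `x_r ≥ 1` over the reals. -/
theorem cMIR_propagates_tightly
    {ι : Type*} [DecidableEq ι] (J : Finset ι) (r : ι) (hr : r ∉ J)
    (a : ι → ℝ) (ha : ∀ j ∈ J, 0 ≤ a j) (b : ℝ)
    (P : Finset ι) (hP : P ⊆ J)
    (btil : ℝ) (hbt : btil = b - ∑ j ∈ P, a j)
    (h0 : 0 < btil) (h1 : btil < 1)
    (ψ : ℝ → ℝ)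
    (hψ : ∀ t, ψ t = (⌊t⌋ : ℝ) + min 1 (Int.fract t / Int.fract btil))
    (x : ι → ℝ)
    (hx0 : ∀ j ∈ J \ P, x j = 0)
    (hxP : ∀ j ∈ P, 0 ≤ x j ∧ x j ≤ 1)
    (hcmir : x r + ∑ j ∈ J \ P, ψ (a j) * x j - ∑ j ∈ P, ψ (-a j) * x j
      ≥ 1 - ∑ j ∈ P, ψ (-a j)) :
    x r ≥ 1 := by
  -- the sum over J \ P vanishes
  have hsum0 : ∑ j ∈ J \ P, ψ (a j) * x j = 0 := by
    apply Finset.sum_eq_zero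
    intro j hj
    rw [hx0 j hj, mul_zero]
  -- key: ψ(-t) ≤ 0 for t ≥ 0
  have hψneg : ∀ t : ℝ, 0 ≤ t → ψ (-t) ≤ 0 := by
    intro t ht
    rw [hψ]
    by_cases h : Int.fract (-t) = 0
    · have hfl : (⌊(-t : ℝ)⌋ : ℝ) = -t := by
        have := Int.self_sub_fract (-t : ℝ)
        rw [h] at this; linarith
      rw [h, zero_div]
      have : min (1 : ℝ) 0 = 0 := min_eq_right (by norm_num)
      rw [this, hfl]; linarith
    · have hfr : 0 < Int.fract (-t) := lt_of_le_of_ne (Int.fract_nonneg _) (Ne.symm h)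
      have hfl : (⌊(-t : ℝ)⌋ : ℝ) ≤ -1 := by
        have hlt : (⌊(-t : ℝ)⌋ : ℝ) < 0 := by
          have := Int.self_sub_fract (-t : ℝ)
          linarith
        have : ⌊(-t : ℝ)⌋ < 0 := by exact_mod_cast hlt
        have : ⌊(-t : ℝ)⌋ ≤ -1 := by omega
        exact_mod_cast this
      have hmin : min (1 : ℝ) (Int.fract (-t) / Int.fract btil) ≤ 1 := min_le_left _ _
      linarith
  -- each term ψ(-a_j)(1 - x_j) ≤ 0
  have hterm : ∀ j ∈ P, ψ (-a j) * (1 - x j) ≤ 0 := by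
    intro j hj
    have h1x : 0 ≤ 1 - x j := by linarith [(hxP j hj).2]
    exact mul_nonpos_of_nonpos_of_nonneg (hψneg _ (ha j (hP hj))) h1x
  have hsumterm : ∑ j ∈ P, ψ (-a j) * (1 - x j) ≤ 0 :=
    Finset.sum_nonpos hterm
  have hexp : ∑ j ∈ P, ψ (-a j) * (1 - x j)
      = ∑ j ∈ P, ψ (-a j) - ∑ j ∈ P, ψ (-a j) * x j := by
    rw [← Finset.sum_sub_distrib]
    congr 1; ext j; ring
  rw [hsum0] at hcmir
  have : ∑ j ∈ P, ψ (-a j) - ∑ j ∈ P, ψ (-a j) * x j ≤ 0 := hexp ▸ hsumterm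
  linarith
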